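/- arXiv:2105.04004 — 2 statements merged into one kernel-verified Lean document; each statement's English description precedes it below -/
import Mathlib

section
/- Every connected graph Γ (multigraph, no loops) in which every vertex has valency at least 3 and with χ(Γ) = d ≥ 2, is a contracted descendant of some 3-regular graph Γ' with χ(Γ') = d. That is, Γ can be obtained from a 3-regular graph with the same value of χ by successively contracting edges. -/
/-- An undirected multigraph without loops. -/
structure MGraph where
  V : Type
  E : Type
  ends : E → Sym2 V
  loopless : ∀ e, ¬ (ends e).IsDiag

/-- Adjacency: there is an edge with the given endpoints. -/
def MGraph.Adj (G : MGraph) (u v : G.V) : Prop := ∃ e, G.ends e = s(u, v)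

/-- Connectedness: nonempty vertex set and any two vertices joined by a walk. -/
def MGraph.Connected (G : MGraph) : Prop :=
  Nonempty G.V ∧ ∀ u v : G.V, Relation.ReflTransGen G.Adj u v

/-- The valency of a vertex. -/
noncomputable def MGraph.valency (G : MGraph) (v : G.V) : ℕ :=
  {e : G.E | v ∈ G.ends e}.ncard

/-- χ(Γ) = |E| - |V| + (number of connected components); the components are
the elements of the quotient of the vertex set by the adjacency relation. -/
noncomputable def MGraph.chi (G : MGraph) : ℤ :=
  (Nat.card G.E : ℤ) - Nat.card G.V + Nat.card (Quot G.Adj)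

/-- `IsContraction G G'` : `G'` is obtained from `G` by contracting an edge `e`
which is the unique edge between its two endpoints: there is a surjection of
vertices identifying exactly the endpoints of `e`, and a bijection between the
edges of `G` other than `e` and the edges of `G'`, compatible with endpoints. -/
def IsContraction (G G' : MGraph) : Prop :=
  ∃ e : G.E,
    (∀ e' : G.E, G.ends e' = G.ends e → e' = e) ∧
    ∃ (φ : G.V → G'.V) (ψ : {f : G.E // f ≠ e} ≃ G'.E),
      Function.Surjective φ ∧
      (∀ u v : G.V, φ u = φ v ↔ u = v ∨ (u ∈ G.ends e ∧ v ∈ G.ends e)) ∧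
      ∀ f : {f : G.E // f ≠ e}, G'.ends (ψ f) = Sym2.map φ (G.ends f.1)

/-- `G'` is a contracted descendant of `G` if it is obtained from `G` by a
sequence of edge contractions. -/
def ContractedDescendant (G' G : MGraph) : Prop :=
  Relation.ReflTransGen IsContraction G G'


/- ### auxiliary lemmas -/

lemma MGraph.adj_symm (G : MGraph) {u v : G.V} (h : G.Adj u v) : G.Adj v u := by
  obtain ⟨e, he⟩ := h; exact ⟨e, by rw [he, Sym2.eq_swap]⟩

lemma quot_mk_eq {G : MGraph} {u v : G.V} (h : Relation.ReflTransGen G.Adj u v) :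
    Quot.mk G.Adj u = Quot.mk G.Adj v := by
  induction h with
  | refl => rfl
  | tail _ h ih => exact ih.trans (Quot.sound h)

lemma card_quot_eq_one (G : MGraph) (h : G.Connected) : Nat.card (Quot G.Adj) = 1 := by
  obtain ⟨⟨v⟩, hpath⟩ := h
  rw [Nat.card_eq_one_iff_exists]
  refine ⟨Quot.mk _ v, fun x => ?_⟩
  induction x using Quot.ind with
  | _ u => exact quot_mk_eq (hpath u v)

section Split

variable (G : MGraph) (v₀ : G.V) (e₁ e₂ : G.E)

open scoped Classical in
/-- redirection of endpoints when splitting `v₀`. -/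
noncomputable def fmap (e : G.E) (u : G.V) : Option G.V :=
  if u = v₀ ∧ (e = e₁ ∨ e = e₂) then none else some u

noncomputable def splitG : MGraph where
  V := Option G.V
  E := Option G.E
  ends x := x.elim s(some v₀, (none : Option G.V)) (fun e => Sym2.map (fmap G v₀ e₁ e₂ e) (G.ends e))
  loopless := by
    rintro (_ | e)
    · simp [Sym2.isDiag_iff_proj_eq]
    · have hinj : Function.Injective (fmap G v₀ e₁ e₂ e) := by
        intro a b hab
        unfold fmap at hab
        split_ifs at hab with h1 h2 h2 <;> simp_all
      simpa [Sym2.isDiag_map hinj] using G.loopless e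

attribute [reducible] splitG

variable {G v₀ e₁ e₂}

lemma phi_fmap (e : G.E) (u : G.V) :
    (fmap G v₀ e₁ e₂ e u).getD v₀ = u := by
  unfold fmap; split_ifs with h
  · exact (h.1).symm ▸ rfl
  · rfl

lemma fmap_inj (e : G.E) : Function.Injective (fmap G v₀ e₁ e₂ e) := by
  intro a b hab
  have := congrArg (fun x => Option.getD x v₀) hab
  simpa [phi_fmap] using this

lemma fmap_eq_none_iff (e : G.E) (u : G.V) :
    fmap G v₀ e₁ e₂ e u = none ↔ u = v₀ ∧ (e = e₁ ∨ e = e₂) := by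
  unfold fmap; split_ifs with h <;> simp [h]

lemma fmap_eq_some_iff (e : G.E) (u w : G.V) :
    fmap G v₀ e₁ e₂ e u = some w ↔ u = w ∧ ¬(u = v₀ ∧ (e = e₁ ∨ e = e₂)) := by
  unfold fmap; split_ifs with h <;> simp_all [eq_comm]

lemma splitG_ends_none :
    (splitG G v₀ e₁ e₂).ends none = s(some v₀, (none : Option G.V)) := rfl

lemma splitG_ends_some (e : G.E) :
    (splitG G v₀ e₁ e₂).ends (some e) = Sym2.map (fmap G v₀ e₁ e₂ e) (G.ends e) := rfl

lemma mem_split_none (e : G.E) (he₁ : v₀ ∈ G.ends e₁) (he₂ : v₀ ∈ G.ends e₂) :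
    none ∈ (splitG G v₀ e₁ e₂).ends (some e) ↔ (e = e₁ ∨ e = e₂) := by
  rw [splitG_ends_some, Sym2.mem_map]
  constructor
  · rintro ⟨a, _, ha⟩
    exact ((fmap_eq_none_iff e a).mp ha).2
  · rintro h
    exact ⟨v₀, by rcases h with h | h <;> simp [h, he₁, he₂, fmap_eq_none_iff]⟩

lemma mem_split_some (e : G.E) (u : G.V) :
    some u ∈ (splitG G v₀ e₁ e₂).ends (some e) ↔
      (u ∈ G.ends e ∧ ¬(u = v₀ ∧ (e = e₁ ∨ e = e₂))) := by
  rw [splitG_ends_some, Sym2.mem_map]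
  constructor
  · rintro ⟨a, ha, h⟩
    obtain ⟨rfl, h2⟩ := (fmap_eq_some_iff e a u).mp h
    exact ⟨ha, h2⟩
  · rintro ⟨h1, h2⟩
    exact ⟨u, h1, (fmap_eq_some_iff e u u).mpr ⟨rfl, h2⟩⟩

lemma split_val_none [Finite G.E] (he₁ : v₀ ∈ G.ends e₁) (he₂ : v₀ ∈ G.ends e₂)
    (hne : e₁ ≠ e₂) :
    (splitG G v₀ e₁ e₂).valency none = 3 := by
  have hset : {y : Option G.E | none ∈ (splitG G v₀ e₁ e₂).ends y}
      = {none, some e₁, some e₂} := by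
    ext (_ | e)
    · simp [splitG_ends_none]
    · simp only [Set.mem_setOf_eq]; rw [mem_split_none e he₁ he₂]; simp
  rw [MGraph.valency]
  show {y : Option G.E | none ∈ (splitG G v₀ e₁ e₂).ends y}.ncard = 3
  rw [hset, Set.ncard_insert_of_notMem (by simp) (Set.toFinite _),
    Set.ncard_pair (by simpa using hne)]

lemma split_val_some_v₀ [Finite G.E] (he₁ : v₀ ∈ G.ends e₁) (he₂ : v₀ ∈ G.ends e₂)
    (hne : e₁ ≠ e₂) :
    (splitG G v₀ e₁ e₂).valency (some v₀) = G.valency v₀ - 1 := by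
  have hset : {y : Option G.E | some v₀ ∈ (splitG G v₀ e₁ e₂).ends y}
      = insert none (some '' ({e : G.E | v₀ ∈ G.ends e} \ {e₁, e₂})) := by
    ext (_ | e)
    · simp [splitG_ends_none]
    · simp only [Set.mem_setOf_eq]; rw [mem_split_some]; simp [Set.mem_insert_iff, Set.mem_image]

  have hsub : {e₁, e₂} ⊆ {e : G.E | v₀ ∈ G.ends e} := by
    rintro x (rfl | rfl)
    · exact he₁
    · exact he₂
  rw [MGraph.valency]
  show {y : Option G.E | some v₀ ∈ (splitG G v₀ e₁ e₂).ends y}.ncard = _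
  rw [hset, Set.ncard_insert_of_notMem (by simp) (Set.toFinite _),
    Set.ncard_image_of_injective _ (Option.some_injective _),
    Set.ncard_diff hsub (Set.toFinite _), Set.ncard_pair hne]
  have h2 : 2 ≤ {e : G.E | v₀ ∈ G.ends e}.ncard := by
    rw [show (2:ℕ) = ({e₁, e₂} : Set G.E).ncard from (Set.ncard_pair hne).symm]
    exact Set.ncard_le_ncard hsub (Set.toFinite _)
  show {e : G.E | v₀ ∈ G.ends e}.ncard - 2 + 1 = {e : G.E | v₀ ∈ G.ends e}.ncard - 1
  omega

lemma split_val_some [Finite G.E] (u : G.V) (hu : u ≠ v₀) :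
    (splitG G v₀ e₁ e₂).valency (some u) = G.valency u := by
  have hset : {y : Option G.E | some u ∈ (splitG G v₀ e₁ e₂).ends y}
      = some '' {e : G.E | u ∈ G.ends e} := by
    ext (_ | e)
    · simp [splitG_ends_none, hu]
    · simp only [Set.mem_setOf_eq]; rw [mem_split_some]; simp [Set.mem_image, hu]
  rw [MGraph.valency]
  show {y : Option G.E | some u ∈ (splitG G v₀ e₁ e₂).ends y}.ncard = _
  rw [hset, Set.ncard_image_of_injective _ (Option.some_injective _)]
  rfl

/-- the edge equivalence used in the contraction. -/
def optEquiv (β : Type) : {f : Option β // f ≠ none} ≃ β where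
  toFun f := match f with
    | ⟨some e, _⟩ => e
    | ⟨none, h⟩ => absurd rfl h
  invFun e := ⟨some e, Option.some_ne_none e⟩
  left_inv f := by
    obtain ⟨(_ | e), hf⟩ := f
    · exact absurd rfl hf
    · rfl
  right_inv e := rfl

lemma split_isContraction (he₁ : v₀ ∈ G.ends e₁) (he₂ : v₀ ∈ G.ends e₂) :
    IsContraction (splitG G v₀ e₁ e₂) G := by
  refine ⟨none, ?_, (fun x => x.getD v₀), optEquiv G.E, ?_, ?_, ?_⟩
  · rintro (_ | e) h
    · rfl
    · exfalso
      have hnone : none ∈ (splitG G v₀ e₁ e₂).ends (some e) := by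
        rw [h, splitG_ends_none]; simp
      have hv₀ : some v₀ ∈ (splitG G v₀ e₁ e₂).ends (some e) := by
        rw [h, splitG_ends_none]; simp
      have h1 := (mem_split_none e he₁ he₂).mp hnone
      have h2 := (mem_split_some e v₀).mp hv₀
      exact h2.2 ⟨rfl, h1⟩
  · intro u; exact ⟨some u, rfl⟩
  · intro u v
    constructor
    · intro h
      rcases u with _ | a <;> rcases v with _ | b <;>
        simp only [Option.getD_none, Option.getD_some] at h
      · exact Or.inl rfl
      · exact Or.inr ⟨by rw [splitG_ends_none]; simp, by rw [splitG_ends_none]; simp [h]⟩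
      · exact Or.inr ⟨by rw [splitG_ends_none]; simp [h], by rw [splitG_ends_none]; simp⟩
      · exact Or.inl (congrArg some h)
    · rintro (rfl | ⟨hu, hv⟩)
      · rfl
      · rw [splitG_ends_none, Sym2.mem_iff] at hu hv
        have key : ∀ x : Option G.V, x = some v₀ ∨ x = none → x.getD v₀ = v₀ := by
          rintro x (rfl | rfl) <;> rfl
        show u.getD v₀ = v.getD v₀
        rw [key u hu, key v hv]
  · rintro ⟨(_ | e), hf⟩
    · exact absurd rfl hf
    · show G.ends e = Sym2.map (fun x : Option G.V => x.getD v₀)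
        ((splitG G v₀ e₁ e₂).ends (some e))
      rw [splitG_ends_some, Sym2.map_map]
      have : ((fun x : Option G.V => x.getD v₀) ∘ fmap G v₀ e₁ e₂ e) = id := by
        funext u; exact phi_fmap e u
      rw [this, Sym2.map_id, id]

lemma split_connected (hconn : G.Connected) :
    (splitG G v₀ e₁ e₂).Connected := by
  set G₂ := splitG G v₀ e₁ e₂ with hG₂
  have newedge : G₂.Adj (some v₀) none := ⟨none, rfl⟩
  have step : ∀ a b : G.V, G.Adj a b →
      Relation.ReflTransGen G₂.Adj (some a) (some b) := by
    intro a b ⟨e, he⟩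
    have hadj : G₂.Adj (fmap G v₀ e₁ e₂ e a) (fmap G v₀ e₁ e₂ e b) :=
      ⟨some e, by rw [splitG_ends_some, he, Sym2.map_pair_eq]⟩
    have conn : ∀ u : G.V, Relation.ReflTransGen G₂.Adj (some u) (fmap G v₀ e₁ e₂ e u) := by
      intro u
      unfold fmap
      split_ifs with h
      · rw [h.1]; exact Relation.ReflTransGen.single newedge
      · exact Relation.ReflTransGen.refl
    have conn' : ∀ u : G.V, Relation.ReflTransGen G₂.Adj (fmap G v₀ e₁ e₂ e u) (some u) := by
      intro u
      unfold fmap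
      split_ifs with h
      · rw [h.1]; exact Relation.ReflTransGen.single (G₂.adj_symm newedge)
      · exact Relation.ReflTransGen.refl
    exact ((conn a).trans (Relation.ReflTransGen.single hadj)).trans (conn' b)
  have lift : ∀ a b : G.V, Relation.ReflTransGen G.Adj a b →
      Relation.ReflTransGen G₂.Adj (some a) (some b) := by
    intro a b h
    induction h with
    | refl => exact Relation.ReflTransGen.refl
    | tail _ h ih => exact ih.trans (step _ _ h)
  refine ⟨⟨none⟩, ?_⟩
  have base : ∀ x : Option G.V, Relation.ReflTransGen G₂.Adj x (some (x.getD v₀)) := by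
    rintro (_ | u)
    · exact Relation.ReflTransGen.single (G₂.adj_symm newedge)
    · exact Relation.ReflTransGen.refl
  have base' : ∀ x : Option G.V, Relation.ReflTransGen G₂.Adj (some (x.getD v₀)) x := by
    rintro (_ | u)
    · exact Relation.ReflTransGen.single newedge
    · exact Relation.ReflTransGen.refl
  intro u v
  exact (base u).trans ((lift _ _ (hconn.2 _ _)).trans (base' v))

lemma split_chi [Finite G.V] [Finite G.E] (hconn : G.Connected) :
    (splitG G v₀ e₁ e₂).chi = G.chi := by
  haveI := Fintype.ofFinite G.V
  haveI := Fintype.ofFinite G.E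
  haveI : Finite (splitG G v₀ e₁ e₂).V := inferInstanceAs (Finite (Option G.V))
  haveI : Finite (splitG G v₀ e₁ e₂).E := inferInstanceAs (Finite (Option G.E))
  rw [MGraph.chi, MGraph.chi, card_quot_eq_one _ (split_connected hconn),
    card_quot_eq_one _ hconn]
  have hV : Nat.card (splitG G v₀ e₁ e₂).V = Nat.card G.V + 1 :=
    Finite.card_option
  have hE : Nat.card (splitG G v₀ e₁ e₂).E = Nat.card G.E + 1 :=
    Finite.card_option
  rw [hV, hE]
  push_cast
  ring

lemma split_mu [Finite G.V] [Finite G.E] (he₁ : v₀ ∈ G.ends e₁) (he₂ : v₀ ∈ G.ends e₂)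
    (hne : e₁ ≠ e₂) (hk : 4 ≤ G.valency v₀) :
    (∑ᶠ v : (splitG G v₀ e₁ e₂).V, ((splitG G v₀ e₁ e₂).valency v - 3)) + 1
      = ∑ᶠ v : G.V, (G.valency v - 3) := by
  haveI := Fintype.ofFinite G.V
  haveI := Classical.decEq G.V
  have h1 : (∑ᶠ v : (splitG G v₀ e₁ e₂).V, ((splitG G v₀ e₁ e₂).valency v - 3))
      = ∑ᶠ v : Option G.V, ((splitG G v₀ e₁ e₂).valency v - 3) := rfl
  rw [h1, finsum_eq_sum_of_fintype, finsum_eq_sum_of_fintype,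
    Fintype.sum_option, split_val_none he₁ he₂ hne]
  rw [← Finset.add_sum_erase _ (fun v => (splitG G v₀ e₁ e₂).valency (some v) - 3)
    (Finset.mem_univ v₀)]
  rw [← Finset.add_sum_erase _ (fun v => G.valency v - 3) (Finset.mem_univ v₀)]
  have h2 : ∑ v ∈ Finset.univ.erase v₀, ((splitG G v₀ e₁ e₂).valency (some v) - 3)
      = ∑ v ∈ Finset.univ.erase v₀, (G.valency v - 3) := by
    refine Finset.sum_congr rfl fun v hv => ?_
    rw [split_val_some v (Finset.ne_of_mem_erase hv)]
  rw [h2, split_val_some_v₀ he₁ he₂ hne]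
  omega

end Split

lemma key_lemma : ∀ (n : ℕ) (G : MGraph), Finite G.V → Finite G.E →
    G.Connected → (∀ v, 3 ≤ G.valency v) →
    (∑ᶠ v : G.V, (G.valency v - 3)) = n →
    ∃ G' : MGraph, Finite G'.V ∧ Finite G'.E ∧ (∀ v, G'.valency v = 3) ∧
      G'.chi = G.chi ∧ Relation.ReflTransGen IsContraction G' G := by
  intro n
  induction n using Nat.strong_induction_on with
  | _ n ih =>
    intro G hV hE hconn hval hsum
    by_cases hall : ∀ v, G.valency v = 3
    · exact ⟨G, hV, hE, hall, rfl, Relation.ReflTransGen.refl⟩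
    · push_neg at hall
      obtain ⟨v₀, hv₀⟩ := hall
      have hk : 4 ≤ G.valency v₀ := by have := hval v₀; omega
      have h2 : 1 < {e : G.E | v₀ ∈ G.ends e}.ncard := by
        have hvv : {e : G.E | v₀ ∈ G.ends e}.ncard = G.valency v₀ := rfl
        omega
      obtain ⟨e₁, e₂, he₁, he₂, hne⟩ := (Set.one_lt_ncard_iff (Set.toFinite _)).mp h2
      haveI := Fintype.ofFinite G.V
      haveI := Fintype.ofFinite G.E
      haveI hV₂ : Finite (splitG G v₀ e₁ e₂).V := inferInstanceAs (Finite (Option G.V))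
      haveI hE₂ : Finite (splitG G v₀ e₁ e₂).E := inferInstanceAs (Finite (Option G.E))
      have hval₂ : ∀ v : (splitG G v₀ e₁ e₂).V, 3 ≤ (splitG G v₀ e₁ e₂).valency v := by
        rintro (_ | u)
        · rw [split_val_none he₁ he₂ hne]
        · by_cases hu : u = v₀
          · subst hu; rw [split_val_some_v₀ he₁ he₂ hne]; omega
          · rw [split_val_some u hu]; exact hval u
      have hmu := split_mu he₁ he₂ hne hk
      rw [hsum] at hmu
      have hlt : (∑ᶠ v : (splitG G v₀ e₁ e₂).V, ((splitG G v₀ e₁ e₂).valency v - 3)) < n := by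
        omega
      obtain ⟨G', hG'V, hG'E, hG'val, hG'chi, hG'desc⟩ :=
        ih _ hlt (splitG G v₀ e₁ e₂) hV₂ hE₂ (split_connected hconn) hval₂ rfl
      refine ⟨G', hG'V, hG'E, hG'val, ?_, ?_⟩
      · rw [hG'chi, split_chi hconn]
      · exact hG'desc.tail (split_isContraction he₁ he₂)



theorem stmt1 (G : MGraph) [Finite G.V] [Finite G.E]
    (hconn : G.Connected)
    (hval : ∀ v : G.V, 3 ≤ G.valency v)
    (d : ℕ) (hd : 2 ≤ d) (hchi : G.chi = d) :
    ∃ G' : MGraph, Finite G'.V ∧ Finite G'.E ∧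
      (∀ v : G'.V, G'.valency v = 3) ∧ G'.chi = d ∧
      ContractedDescendant G G' := by
  obtain ⟨G', h1, h2, h3, h4, h5⟩ :=
    key_lemma (∑ᶠ v : G.V, (G.valency v - 3)) G ‹_› ‹_› hconn hval rfl
  exact ⟨G', h1, h2, h3, by rw [h4, hchi], h5⟩
end

section
/- Let ∇ ⊂ ℝ³ be the polytope defined by x,y,z ≥ 0, 1-y-z ≥ 0, 1-x-y ≥ 0. For every positive integer n, the number of lattice points in n∇ equals C(n+3,3) + C(n+2,3) = (2n³ + 9n² + 13n + 6)/6. -/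
open Pointwise

def nabla : Set (ℝ × ℝ × ℝ) :=
  {p : ℝ × ℝ × ℝ |
    0 ≤ p.1 ∧
    0 ≤ p.2.1 ∧
    0 ≤ p.2.2 ∧
    0 ≤ 1 - p.2.1 - p.2.2 ∧
    0 ≤ 1 - p.1 - p.2.1}

noncomputable def boxN (n : ℕ) : Finset (ℤ × ℤ × ℤ) :=
  (Finset.range (n + 1)).biUnion (fun y =>
    ((Finset.Icc (0:ℤ) ((n:ℤ) - y)) ×ˢ (Finset.Icc (0:ℤ) ((n:ℤ) - y))).image
      (fun p => (p.1, (y : ℤ), p.2)))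

lemma mem_boxN (n : ℕ) (v : ℤ × ℤ × ℤ) :
    v ∈ boxN n ↔ 0 ≤ v.1 ∧ 0 ≤ v.2.1 ∧ 0 ≤ v.2.2 ∧
      v.2.1 + v.2.2 ≤ n ∧ v.1 + v.2.1 ≤ n := by
  obtain ⟨x, y, z⟩ := v
  simp only [boxN, Finset.mem_biUnion, Finset.mem_image, Finset.mem_product,
    Finset.mem_Icc, Finset.mem_range, Prod.mk.injEq, Prod.exists]
  constructor
  · rintro ⟨w, hw, a, b, ⟨⟨ha0, ha1⟩, hb0, hb1⟩, rfl, rfl, rfl⟩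
    refine ⟨ha0, by positivity, hb0, ?_, ?_⟩ <;> omega
  · rintro ⟨hx, hy, hz, h1, h2⟩
    refine ⟨y.toNat, by omega, x, z, ⟨⟨hx, by omega⟩, hz, by omega⟩, rfl, by omega, rfl⟩

lemma card_boxN (n : ℕ) : (boxN n).card = ∑ y ∈ Finset.range (n + 1), (n - y + 1) ^ 2 := by
  rw [boxN, Finset.card_biUnion]
  · refine Finset.sum_congr rfl fun y hy => ?_
    rw [Finset.card_image_of_injective _ (fun p q h => by
      simpa [Prod.ext_iff] using h)]
    rw [Finset.card_product, Int.card_Icc]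
    have : y ≤ n := by simpa using Nat.lt_succ_iff.mp (Finset.mem_range.mp hy)
    have : ((n:ℤ) - y + 1 - 0).toNat = n - y + 1 := by omega
    rw [this]; ring
  · intro a ha b hb hab
    simp only [Finset.disjoint_left, Finset.mem_image, Finset.mem_product]
    rintro v ⟨p, hp, rfl⟩ ⟨q, hq, h⟩
    simp only [Prod.mk.injEq] at h
    exact hab (by exact_mod_cast h.2.1.symm)

lemma sum_sq (m : ℕ) : 6 * ∑ k ∈ Finset.range m, (k + 1) ^ 2
    = m * (m + 1) * (2 * m + 1) := by
  induction m with
  | zero => simp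
  | succ m ih => rw [Finset.sum_range_succ, Nat.mul_add, ih]; ring

lemma choose3 (m : ℕ) : (m + 3).choose 3 * 6 = (m + 3) * (m + 2) * (m + 1) := by
  have h6 : Nat.factorial 3 = 6 := rfl
  have h : (m + 3).choose 3 * 6 = (m + 3).descFactorial 3 := by
    rw [Nat.choose_eq_descFactorial_div_factorial, h6]
    exact Nat.div_mul_cancel (h6 ▸ Nat.factorial_dvd_descFactorial (m + 3) 3)
  rw [h]
  simp [Nat.descFactorial]
  ring

theorem stmt4 (n : ℕ) (hn : 0 < n) :
    {v : ℤ × ℤ × ℤ | (((v.1 : ℝ), (v.2.1 : ℝ), (v.2.2 : ℝ)) : ℝ × ℝ × ℝ) ∈ (n : ℝ) • nabla}.ncard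
        = Nat.choose (n + 3) 3 + Nat.choose (n + 2) 3 ∧
      ((Nat.choose (n + 3) 3 + Nat.choose (n + 2) 3 : ℚ))
        = (2 * (n : ℚ) ^ 3 + 9 * (n : ℚ) ^ 2 + 13 * (n : ℚ) ^ 1 + 6) / 6 := by
  have hn' : (0:ℝ) < n := by exact_mod_cast hn
  have hinv := mul_inv_cancel₀ hn'.ne'
  -- the set equals boxN n
  have hset : {v : ℤ × ℤ × ℤ |
      (((v.1 : ℝ), (v.2.1 : ℝ), (v.2.2 : ℝ)) : ℝ × ℝ × ℝ) ∈ (n : ℝ) • nabla}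
      = ↑(boxN n) := by
    ext ⟨x, y, z⟩
    rw [Set.mem_setOf_eq, Set.mem_smul_set_iff_inv_smul_mem₀ hn'.ne', Finset.mem_coe,
      mem_boxN]
    have hpos : (0:ℝ) < (n:ℝ)⁻¹ := by positivity
    simp only [nabla, Prod.smul_mk, smul_eq_mul, Set.mem_setOf_eq]
    constructor
    · rintro ⟨h1, h2, h3, h4, h5⟩
      refine ⟨?_, ?_, ?_, ?_, ?_⟩
      · exact_mod_cast nonneg_of_mul_nonneg_right h1 hpos
      · exact_mod_cast nonneg_of_mul_nonneg_right h2 hpos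
      · exact_mod_cast nonneg_of_mul_nonneg_right h3 hpos
      · have : (y:ℝ) + z ≤ n := by nlinarith
        exact_mod_cast this
      · have : (x:ℝ) + y ≤ n := by nlinarith
        exact_mod_cast this
    · rintro ⟨h1, h2, h3, h4, h5⟩
      have h1' : (0:ℝ) ≤ x := by exact_mod_cast h1
      have h2' : (0:ℝ) ≤ y := by exact_mod_cast h2
      have h3' : (0:ℝ) ≤ z := by exact_mod_cast h3
      have h4' : (y:ℝ) + z ≤ n := by exact_mod_cast h4
      have h5' : (x:ℝ) + y ≤ n := by exact_mod_cast h5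
      refine ⟨by positivity, by positivity, by positivity, ?_, ?_⟩ <;> nlinarith
  have hkey : 6 * (boxN n).card = (n + 1) * (n + 2) * (2 * n + 3) := by
    rw [card_boxN]
    have : ∑ y ∈ Finset.range (n + 1), (n - y + 1) ^ 2
        = ∑ k ∈ Finset.range (n + 1), (k + 1) ^ 2 := by
      rw [← Finset.sum_range_reflect]
      refine Finset.sum_congr rfl fun k hk => ?_
      have : k < n + 1 := Finset.mem_range.mp hk
      congr 1
      omega
    rw [this, sum_sq]
    ring
  have hchoose : 6 * ((n + 3).choose 3 + (n + 2).choose 3)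
      = (n + 1) * (n + 2) * (2 * n + 3) := by
    have h1 := choose3 n
    have h2 : (n + 2).choose 3 * 6 = (n + 2) * (n + 1) * n := by
      cases n with
      | zero => simp
      | succ m => have := choose3 m; convert this using 2 <;> ring
    calc 6 * ((n + 3).choose 3 + (n + 2).choose 3)
        = (n + 3).choose 3 * 6 + (n + 2).choose 3 * 6 := by ring
      _ = (n + 3) * (n + 2) * (n + 1) + (n + 2) * (n + 1) * n := by rw [h1, h2]
      _ = (n + 1) * (n + 2) * (2 * n + 3) := by ring
  constructor
  · rw [hset, Set.ncard_coe_finset]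
    have h6 : 6 * (boxN n).card = 6 * ((n + 3).choose 3 + (n + 2).choose 3) :=
      hkey.trans hchoose.symm
    omega
  · have : ((n + 1) * (n + 2) * (2 * n + 3) : ℚ)
        = 6 * ((n + 3).choose 3 + (n + 2).choose 3 : ℕ) := by
      exact_mod_cast congrArg (fun m : ℕ => (m : ℚ)) hchoose.symm
    push_cast at this ⊢
    field_simp
    linarith [this]
end
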